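/- Let μ, δ, S, κ, σ, β satisfy (1+√5)/2 ≤ κ < 2, (κ+1)μ < δ, κ²/(κ-1)·μ < κβ < σ < S, and β > μ + σ - δ. Then each of the exponents β - κ(β-μ), σ - δ - κ(β-μ), and κ(σ-δ)₊ - (δ-σ)₊ - κ(β-μ) is strictly negative. -/
import Mathlib

/-- Negativity of the three exponents of `φ₁` in the regime `(1+√5)/2 ≤ κ < 2`. -/
theorem stmt_14 (μ δ S κ σ β : ℝ) (hμ : 0 < μ)
    (hκ1 : (1 + Real.sqrt 5) / 2 ≤ κ) (hκ2 : κ < 2)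
    (hδ : (κ + 1) * μ < δ)
    (h1 : κ ^ 2 / (κ - 1) * μ < κ * β) (h2 : κ * β < σ) (h3 : σ < S)
    (h4 : μ + σ - δ < β) :
    β - κ * (β - μ) < 0 ∧
    σ - δ - κ * (β - μ) < 0 ∧
    κ * max (σ - δ) 0 - max (δ - σ) 0 - κ * (β - μ) < 0 := by
  have hs : (2:ℝ) ≤ Real.sqrt 5 := by
    nlinarith [Real.sq_sqrt (show (0:ℝ) ≤ 5 by norm_num), Real.sqrt_nonneg 5]
  have hκ : (3:ℝ)/2 ≤ κ := by linarith
  have hb : κ * μ < (κ - 1) * β := by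
    rw [div_mul_eq_mul_div, div_lt_iff₀ (by linarith : (0:ℝ) < κ - 1)] at h1
    nlinarith
  have hβμ : μ < β := by nlinarith
  refine ⟨by nlinarith, by nlinarith, ?_⟩
  rcases le_total (σ - δ) 0 with h | h
  · rw [max_eq_right h, max_eq_left (by linarith)]
    nlinarith
  · rw [max_eq_left h, max_eq_right (by linarith)]
    nlinarith
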